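/- (Theorem 3, sufficiency bound.) Assume N ≥ |𝓜| + 1 and 1 ≤ k ≤ N, and let 𝔾 be a nonempty set of Borel probability measures on valuations with ambiguity set 𝔽 = {F : F̄ ∈ 𝔾}. If the menu 𝓜 is 𝔾-sufficient, then inf_{F∈𝔽} E_F[Rᵏ_𝓜(v)] ≥ inf_{F∈𝔽} V*(F) − (k−1)·|𝓜|·v̄/N. -/

import Mathlib

open MeasureTheory
open scoped ENNReal BigOperators

namespace RankGuaranteedAuctions

/-- A bundle of items, where the set of items is `Fin M`. -/
abbrev Bundle (M : ℕ) := Finset (Fin M)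

/-- A valuation assigns a real value to every bundle. -/
abbrev Valuation (M : ℕ) := Bundle M → ℝ

/-- A valuation is normalized: value `0` for the empty bundle and values in `[0, vbar]`. -/
def IsValuation (M : ℕ) (vbar : ℝ) (v : Valuation M) : Prop :=
  v ∅ = 0 ∧ ∀ b : Bundle M, 0 ≤ v b ∧ v b ≤ vbar

/-- A menu is a nonempty collection of nonempty bundles. -/
def IsMenu (M : ℕ) (Menu : Finset (Bundle M)) : Prop :=
  Menu.Nonempty ∧ ∅ ∉ Menu

/-- The complete menu `2^S` of all nonempty bundles. -/
noncomputable def completeMenu (M : ℕ) : Finset (Bundle M) :=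
  Finset.univ.erase ∅

/-- A feasible allocation: a set of pairwise disjoint bundles from the menu. -/
def Feasible (M : ℕ) (Menu X : Finset (Bundle M)) : Prop :=
  X ⊆ Menu ∧ ∀ b ∈ X, ∀ b' ∈ X, b ≠ b' → Disjoint b b'

/-- The maximum of `∑ b ∈ X, f b` over feasible allocations `X` from the menu. -/
noncomputable def maxAlloc (M : ℕ) (Menu : Finset (Bundle M)) (f : Bundle M → ℝ) : ℝ :=
  sSup {y : ℝ | ∃ X : Finset (Bundle M), Feasible M Menu X ∧ y = ∑ b ∈ X, f b}

/-- The `k`-th highest value among `w 0, …, w (N-1)` (for `1 ≤ k ≤ N`):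
the maximum over sets `T` of `k` bidders of the minimum of `w` on `T`. -/
noncomputable def kthHighest (N : ℕ) (w : Fin N → ℝ) (k : ℕ) : ℝ :=
  sSup {x : ℝ | ∃ T : Finset (Fin N), T.card = k ∧ x = sInf (w '' (T : Set (Fin N)))}

/-- The `k`-th rank guarantee `R^k_𝓜(v)`. -/
noncomputable def rankGuarantee (M N : ℕ) (Menu : Finset (Bundle M))
    (v : Fin N → Valuation M) (k : ℕ) : ℝ :=
  maxAlloc M Menu fun b => kthHighest N (fun n => v n b) k

/-- The ex-post efficient surplus: the maximum over feasible allocations `X` with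
`|X| ≤ N` and injective assignments `ι` of bundles in `X` to bidders of the total value. -/
noncomputable def surplusEx (M N : ℕ) (Menu : Finset (Bundle M))
    (v : Fin N → Valuation M) : ℝ :=
  sSup {y : ℝ | ∃ X : Finset (Bundle M), Feasible M Menu X ∧ X.card ≤ N ∧
    ∃ ι : Bundle M → Fin N, Set.InjOn ι ↑X ∧ y = ∑ b ∈ X, v (ι b) b}

/-- The average `F̄ = (1/N) ∑ₙ Fₙ` of the bidder-marginals of `F`. -/
noncomputable def avgMarginal (M N : ℕ) (F : Measure (Fin N → Valuation M)) :
    Measure (Valuation M) :=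
  (N : ℝ≥0∞)⁻¹ • ∑ n : Fin N, F.map (fun v => v n)

/-- The ex-ante efficient surplus `V_𝓜(F)`. -/
noncomputable def Vsurplus (M N : ℕ) (Menu : Finset (Bundle M))
    (F : Measure (Fin N → Valuation M)) : ℝ :=
  ∫ v, surplusEx M N Menu v ∂F

/-- A Borel probability measure on valuation profiles (supported on profiles of
valuations bounded by `vbar`). -/
def ProfileOK (M N : ℕ) (vbar : ℝ) (F : Measure (Fin N → Valuation M)) : Prop :=
  IsProbabilityMeasure F ∧ F {v | ∀ n, IsValuation M vbar (v n)} = 1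

/-- A Borel probability measure on valuations (supported on valuations bounded by `vbar`). -/
def ValOK (M : ℕ) (vbar : ℝ) (G : Measure (Valuation M)) : Prop :=
  IsProbabilityMeasure G ∧ G {w | IsValuation M vbar w} = 1

/-- `κ` is a partition of the bundle `b` into nonempty, pairwise disjoint parts. -/
def IsPartitionOf (M : ℕ) (κ : Finset (Bundle M)) (b : Bundle M) : Prop :=
  (∀ c ∈ κ, c ≠ ∅) ∧ (∀ c ∈ κ, ∀ c' ∈ κ, c ≠ c' → Disjoint c c') ∧ κ.sup id = b

/-- Feasibility for homogeneous goods: total number of allocated items is at most `M`. -/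
def FeasibleQ (M : ℕ) (Menu X : Finset (Bundle M)) : Prop :=
  X ⊆ Menu ∧ ∑ b ∈ X, b.card ≤ M

/-- The maximum of `∑ b ∈ X, f b` over homogeneous-goods-feasible allocations `X`. -/
noncomputable def maxAllocQ (M : ℕ) (Menu : Finset (Bundle M)) (f : Bundle M → ℝ) : ℝ :=
  sSup {y : ℝ | ∃ X : Finset (Bundle M), FeasibleQ M Menu X ∧ y = ∑ b ∈ X, f b}

/-- An assignment of pairwise disjoint bundles to the `N` bidders. -/
def IsAssignment (M N : ℕ) (a : Fin N → Bundle M) : Prop :=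
  ∀ n n' : Fin N, n ≠ n' → Disjoint (a n) (a n')

/-- An assignment is efficient if it maximizes total value over all assignments. -/
def IsEfficient (M N : ℕ) (v : Fin N → Valuation M) (a : Fin N → Bundle M) : Prop :=
  IsAssignment M N a ∧
    ∀ a' : Fin N → Bundle M, IsAssignment M N a' → ∑ n, v n (a' n) ≤ ∑ n, v n (a n)

/-- The VCG revenue at the efficient assignment `a`: the sum over bidders `n` of
`max_{assignments to bidders other than n} ∑_{n' ≠ n} v^{n'} − ∑_{n' ≠ n} v^{n'}(a n')`. -/
noncomputable def vcgRevenue (M N : ℕ) (v : Fin N → Valuation M)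
    (a : Fin N → Bundle M) : ℝ :=
  ∑ n : Fin N,
    (sSup {y : ℝ | ∃ a' : Fin N → Bundle M, IsAssignment M N a' ∧ a' n = ∅ ∧
        y = ∑ n' ∈ Finset.univ.erase n, v n' (a' n')}
      - ∑ n' ∈ Finset.univ.erase n, v n' (a n'))

/-- An unbounded valuation: value `0` for the empty bundle and nonnegative values. -/
def IsValuationNN (M : ℕ) (v : Valuation M) : Prop :=
  v ∅ = 0 ∧ ∀ b : Bundle M, 0 ≤ v b

/-- The top-`(k-1)/N` quantile of `v b` under `G`. -/
noncomputable def quantileQ (M N k : ℕ) (G : Measure (Valuation M)) (b : Bundle M) : ℝ :=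
  sInf {q : ℝ | 0 ≤ q ∧ G {w | q < w b} ≤ ((k - 1 : ℕ) : ℝ≥0∞) / (N : ℝ≥0∞)}

/- ===== auxiliary development ===== -/

open scoped Classical

section AuxBasic
variable {M N k : ℕ} {vbar : ℝ} {Menu : Finset (Bundle M)}

lemma setOf_exists_eq' {α : Type*} (P : α → Prop) (f : α → ℝ) :
    {y : ℝ | ∃ X, P X ∧ y = f X} = f '' {X | P X} := by
  ext y
  constructor
  · rintro ⟨X, hX, rfl⟩; exact ⟨X, hX, rfl⟩
  · rintro ⟨X, hX, rfl⟩; exact ⟨X, hX, rfl⟩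

lemma finite_setOf_exists' {α : Type*} [Finite α] (P : α → Prop) (f : α → ℝ) :
    {y : ℝ | ∃ X, P X ∧ y = f X}.Finite := by
  rw [setOf_exists_eq']; exact (Set.toFinite _).image f

lemma feasible_empty : Feasible M Menu ∅ := ⟨Finset.empty_subset _, by simp⟩

lemma le_maxAlloc {X : Finset (Bundle M)} (hX : Feasible M Menu X) (f : Bundle M → ℝ) :
    ∑ b ∈ X, f b ≤ maxAlloc M Menu f :=
  le_csSup (finite_setOf_exists' _ _).bddAbove ⟨X, hX, rfl⟩

lemma maxAlloc_nonneg (f : Bundle M → ℝ) : 0 ≤ maxAlloc M Menu f := by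
  simpa using le_maxAlloc (feasible_empty (Menu := Menu)) f

lemma maxAlloc_exists (f : Bundle M → ℝ) :
    ∃ X : Finset (Bundle M), Feasible M Menu X ∧ maxAlloc M Menu f = ∑ b ∈ X, f b := by
  have h : maxAlloc M Menu f ∈
      {y : ℝ | ∃ X : Finset (Bundle M), Feasible M Menu X ∧ y = ∑ b ∈ X, f b} :=
    Set.Nonempty.csSup_mem ⟨0, ∅, feasible_empty, by simp⟩ (finite_setOf_exists' _ _)
  exact h

lemma maxAlloc_le {c : ℝ} (f : Bundle M → ℝ)
    (hc : ∀ X : Finset (Bundle M), Feasible M Menu X → ∑ b ∈ X, f b ≤ c) :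
    maxAlloc M Menu f ≤ c := by
  refine csSup_le ⟨0, ∅, feasible_empty, by simp⟩ ?_
  rintro y ⟨X, hX, rfl⟩; exact hc X hX

lemma maxAlloc_le_bound {f : Bundle M → ℝ} (hvbar : 0 ≤ vbar)
    (hf : ∀ b, 0 ≤ f b ∧ f b ≤ vbar) :
    maxAlloc M Menu f ≤ Menu.card * vbar := by
  refine maxAlloc_le f fun X hX => ?_
  calc ∑ b ∈ X, f b ≤ ∑ _b ∈ X, vbar := Finset.sum_le_sum fun b _ => (hf b).2
    _ = X.card * vbar := by simp [mul_comm]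
    _ ≤ Menu.card * vbar := by
        have := Finset.card_le_card hX.1
        exact mul_le_mul_of_nonneg_right (by exact_mod_cast this) hvbar

lemma finite_kset (w : Fin N → ℝ) (k : ℕ) :
    {x : ℝ | ∃ T : Finset (Fin N), T.card = k ∧ x = sInf (w '' (T : Set (Fin N)))}.Finite := by
  have h : {x : ℝ | ∃ T : Finset (Fin N), T.card = k ∧ x = sInf (w '' (T : Set (Fin N)))} =
      (fun T : Finset (Fin N) => sInf (w '' (T : Set (Fin N)))) '' {T | T.card = k} := by
    ext x; constructor
    · rintro ⟨T, hT, rfl⟩; exact ⟨T, hT, rfl⟩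
    · rintro ⟨T, hT, rfl⟩; exact ⟨T, hT, rfl⟩
  rw [h]; exact (Set.toFinite _).image _

lemma sInf_image_finset {T : Finset (Fin N)} (hT : T.Nonempty) (w : Fin N → ℝ) :
    sInf (w '' (T : Set (Fin N))) = T.inf' hT w := (Finset.inf'_eq_csInf_image T hT w).symm

lemma kth_exists {w : Fin N → ℝ} (hkN : k ≤ N) :
    ∃ T : Finset (Fin N), T.card = k ∧ kthHighest N w k = sInf (w '' (T : Set (Fin N))) := by
  obtain ⟨T, -, hT⟩ := Finset.exists_subset_card_eq (s := (Finset.univ : Finset (Fin N))) (n := k)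
    (by simpa using hkN)
  have h : kthHighest N w k ∈
      {x : ℝ | ∃ T : Finset (Fin N), T.card = k ∧ x = sInf (w '' (T : Set (Fin N)))} :=
    Set.Nonempty.csSup_mem ⟨_, T, hT, rfl⟩ (finite_kset w k)
  exact h

lemma kth_mem_range {w : Fin N → ℝ} (hk1 : 1 ≤ k) (hkN : k ≤ N) :
    ∃ n : Fin N, kthHighest N w k = w n := by
  obtain ⟨T, hTcard, hEq⟩ := kth_exists (w := w) hkN
  have hTne : T.Nonempty := Finset.card_pos.mp (hTcard ▸ hk1)
  obtain ⟨n, -, hn⟩ := Finset.exists_mem_eq_inf' hTne w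
  exact ⟨n, by rw [hEq, sInf_image_finset hTne, hn]⟩

lemma kth_nonneg {w : Fin N → ℝ} (hk1 : 1 ≤ k) (hkN : k ≤ N) (hw : ∀ n, 0 ≤ w n) :
    0 ≤ kthHighest N w k := by
  obtain ⟨n, hn⟩ := kth_mem_range (w := w) hk1 hkN; rw [hn]; exact hw n

lemma kth_le {w : Fin N → ℝ} (hk1 : 1 ≤ k) (hkN : k ≤ N) (hw : ∀ n, w n ≤ vbar) :
    kthHighest N w k ≤ vbar := by
  obtain ⟨n, hn⟩ := kth_mem_range (w := w) hk1 hkN; rw [hn]; exact hw n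

lemma kth_bad_card {w : Fin N → ℝ} (hk1 : 1 ≤ k) :
    ((Finset.univ : Finset (Fin N)).filter fun n => kthHighest N w k < w n).card < k := by
  by_contra h
  push_neg at h
  obtain ⟨T, hTsub, hTcard⟩ := Finset.exists_subset_card_eq h
  have hTne : T.Nonempty := Finset.card_pos.mp (hTcard ▸ hk1)
  have hlt : kthHighest N w k < T.inf' hTne w := by
    rw [Finset.lt_inf'_iff]
    intro n hn
    exact (Finset.mem_filter.mp (hTsub hn)).2
  have hle : sInf (w '' (T : Set (Fin N))) ≤ kthHighest N w k :=
    le_csSup (finite_kset w k).bddAbove ⟨T, hTcard, rfl⟩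
  rw [sInf_image_finset hTne] at hle
  exact absurd (hle.trans_lt hlt) (lt_irrefl _)

end AuxBasic
section AuxMeas
variable {M N k : ℕ} {vbar : ℝ} {Menu : Finset (Bundle M)}

lemma measurable_sup'_fun {ι δ : Type*} [MeasurableSpace δ] {s : Finset ι} (hs : s.Nonempty)
    {f : ι → δ → ℝ} (hf : ∀ i ∈ s, Measurable (f i)) :
    Measurable fun x => s.sup' hs fun i => f i x := by
  have h : (fun x => s.sup' hs fun i => f i x) = s.sup' hs f := by
    funext x; exact (Finset.sup'_apply hs f x).symm
  rw [h]; exact Finset.measurable_sup' hs hf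

lemma measurable_inf'_fun {ι δ : Type*} [MeasurableSpace δ] {s : Finset ι} (hs : s.Nonempty)
    {f : ι → δ → ℝ} (hf : ∀ i ∈ s, Measurable (f i)) :
    Measurable fun x => s.inf' hs fun i => f i x := by
  have h : (fun x => s.inf' hs fun i => f i x) = s.inf' hs f := by
    funext x; exact (Finset.inf'_apply hs f x).symm
  rw [h]
  exact Finset.inf'_induction hs _ (fun _f hf _g hg => hf.inf hg) hf

noncomputable def feasSet (M : ℕ) (Menu : Finset (Bundle M)) : Finset (Finset (Bundle M)) :=
  Finset.univ.filter (Feasible M Menu)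

lemma feasSet_nonempty : (feasSet M Menu).Nonempty :=
  ⟨∅, by simp [feasSet, feasible_empty]⟩

lemma maxAlloc_eq_sup' (f : Bundle M → ℝ) :
    maxAlloc M Menu f = (feasSet M Menu).sup' feasSet_nonempty (fun X => ∑ b ∈ X, f b) := by
  rw [Finset.sup'_eq_csSup_image, maxAlloc]
  congr 1
  ext y
  simp only [Set.mem_setOf_eq, Set.mem_image, Finset.mem_coe, feasSet, Finset.mem_filter,
    Finset.mem_univ, true_and]
  constructor
  · rintro ⟨X, hX, rfl⟩; exact ⟨X, hX, rfl⟩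
  · rintro ⟨X, hX, rfl⟩; exact ⟨X, hX, rfl⟩

lemma measurable_maxAlloc : Measurable fun w : Valuation M => maxAlloc M Menu w := by
  have h : (fun w : Valuation M => maxAlloc M Menu w)
      = fun w => (feasSet M Menu).sup' feasSet_nonempty (fun X => ∑ b ∈ X, w b) :=
    funext fun w => maxAlloc_eq_sup' w
  rw [h]
  exact measurable_sup'_fun _ fun X _ => Finset.measurable_sum _ fun b _ => measurable_pi_apply b

noncomputable def ksetF (N k : ℕ) : Finset (Finset (Fin N)) :=
  Finset.univ.filter fun T => T.card = k

lemma ksetF_nonempty (hkN : k ≤ N) : (ksetF N k).Nonempty := by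
  obtain ⟨T, -, hT⟩ := Finset.exists_subset_card_eq (s := (Finset.univ : Finset (Fin N))) (n := k)
    (by simpa using hkN)
  exact ⟨T, by simp [ksetF, hT]⟩

lemma kthHighest_eq_sup' (hkN : k ≤ N) (w : Fin N → ℝ) :
    kthHighest N w k = (ksetF N k).sup' (ksetF_nonempty hkN)
      (fun T => sInf (w '' (T : Set (Fin N)))) := by
  rw [Finset.sup'_eq_csSup_image, kthHighest]
  congr 1
  ext y
  simp only [Set.mem_setOf_eq, Set.mem_image, Finset.mem_coe, ksetF, Finset.mem_filter,
    Finset.mem_univ, true_and]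
  constructor
  · rintro ⟨T, hT, rfl⟩; exact ⟨T, hT, rfl⟩
  · rintro ⟨T, hT, rfl⟩; exact ⟨T, hT, rfl⟩

lemma measurable_kth (hk1 : 1 ≤ k) (hkN : k ≤ N) (b : Bundle M) :
    Measurable fun v : Fin N → Valuation M => kthHighest N (fun m => v m b) k := by
  have h : (fun v : Fin N → Valuation M => kthHighest N (fun m => v m b) k)
      = fun v => (ksetF N k).sup' (ksetF_nonempty hkN)
          (fun T => sInf ((fun m => v m b) '' (T : Set (Fin N)))) :=
    funext fun v => kthHighest_eq_sup' hkN _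
  rw [h]
  refine measurable_sup'_fun _ fun T hT => ?_
  have hTcard : T.card = k := (Finset.mem_filter.mp hT).2
  have hTne : T.Nonempty := Finset.card_pos.mp (hTcard ▸ hk1)
  have h2 : (fun v : Fin N → Valuation M => sInf ((fun m => v m b) '' (T : Set (Fin N))))
      = fun v => T.inf' hTne (fun m => v m b) := funext fun v => sInf_image_finset hTne _
  rw [h2]
  exact measurable_inf'_fun hTne fun m _ =>
    (measurable_pi_apply b).comp (measurable_pi_apply m)

lemma measurable_rank (hk1 : 1 ≤ k) (hkN : k ≤ N) :
    Measurable fun v : Fin N → Valuation M => rankGuarantee M N Menu v k := by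
  have h : (fun v : Fin N → Valuation M => rankGuarantee M N Menu v k)
      = fun v => (feasSet M Menu).sup' feasSet_nonempty
          (fun X => ∑ b ∈ X, kthHighest N (fun m => v m b) k) :=
    funext fun v => maxAlloc_eq_sup' _
  rw [h]
  exact measurable_sup'_fun _ fun X _ =>
    Finset.measurable_sum _ fun b _ => measurable_kth hk1 hkN b

noncomputable def assignSet (M N : ℕ) (Menu : Finset (Bundle M)) :
    Finset (Finset (Bundle M) × (Bundle M → Fin N)) :=
  Finset.univ.filter fun p => Feasible M Menu p.1 ∧ p.1.card ≤ N ∧ Set.InjOn p.2 ↑p.1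

lemma assignSet_nonempty (hN1 : 1 ≤ N) : (assignSet M N Menu).Nonempty :=
  ⟨(∅, fun _ => ⟨0, hN1⟩), by simp [assignSet, feasible_empty]⟩

lemma surplusEx_eq_sup' (hN1 : 1 ≤ N) (v : Fin N → Valuation M) :
    surplusEx M N Menu v = (assignSet M N Menu).sup' (assignSet_nonempty hN1)
      (fun p => ∑ b ∈ p.1, v (p.2 b) b) := by
  rw [Finset.sup'_eq_csSup_image, surplusEx]
  congr 1
  ext y
  simp only [Set.mem_setOf_eq, Set.mem_image, Finset.mem_coe, assignSet, Finset.mem_filter,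
    Finset.mem_univ, true_and]
  constructor
  · rintro ⟨X, h1, h2, ι, h3, rfl⟩; exact ⟨(X, ι), ⟨h1, h2, h3⟩, rfl⟩
  · rintro ⟨⟨X, ι⟩, ⟨h1, h2, h3⟩, rfl⟩; exact ⟨X, h1, h2, ι, h3, rfl⟩

lemma surplusEx_nonneg (hN1 : 1 ≤ N) (v : Fin N → Valuation M) :
    0 ≤ surplusEx M N Menu v := by
  rw [surplusEx_eq_sup' hN1]
  have hmem : ((∅, fun _ => (⟨0, hN1⟩ : Fin N)) : Finset (Bundle M) × (Bundle M → Fin N))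
      ∈ assignSet M N Menu := by simp [assignSet, feasible_empty]
  exact le_trans (le_of_eq (by simp)) (Finset.le_sup' (fun p : Finset (Bundle M) × (Bundle M → Fin N) =>
    ∑ b ∈ p.1, v (p.2 b) b) hmem)

lemma surplusEx_diag_le (hN1 : 1 ≤ N) (w : Valuation M) :
    surplusEx M N Menu (fun _ => w) ≤ maxAlloc M Menu w := by
  rw [surplusEx_eq_sup' hN1]
  refine Finset.sup'_le _ _ fun p hp => ?_
  have hfeas : Feasible M Menu p.1 := ((Finset.mem_filter.mp hp).2).1
  simpa using le_maxAlloc hfeas w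

lemma measurable_surplusEx (hN1 : 1 ≤ N) :
    Measurable fun v : Fin N → Valuation M => surplusEx M N Menu v := by
  have h : (fun v : Fin N → Valuation M => surplusEx M N Menu v)
      = fun v => (assignSet M N Menu).sup' (assignSet_nonempty hN1)
          (fun p => ∑ b ∈ p.1, v (p.2 b) b) := funext fun v => surplusEx_eq_sup' hN1 v
  rw [h]
  exact measurable_sup'_fun _ fun p _ => Finset.measurable_sum _ fun b _ =>
    (measurable_pi_apply b).comp (measurable_pi_apply (p.2 b))

end AuxMeas
section AuxLemmaA
variable {M N k : ℕ} {vbar : ℝ} {Menu : Finset (Bundle M)}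

lemma rank_le_bound (hk1 : 1 ≤ k) (hkN : k ≤ N) (hvbar : 0 ≤ vbar)
    (v : Fin N → Valuation M) (hv : ∀ n, IsValuation M vbar (v n)) :
    rankGuarantee M N Menu v k ≤ Menu.card * vbar := by
  refine maxAlloc_le_bound hvbar fun b => ?_
  exact ⟨kth_nonneg hk1 hkN fun m => ((hv m).2 b).1,
    kth_le hk1 hkN fun m => ((hv m).2 b).2⟩

/-- Pointwise key inequality (Lemma A). -/
lemma lemmaA (hk1 : 1 ≤ k) (hkN : k ≤ N) (hvbar : 0 ≤ vbar)
    (v : Fin N → Valuation M) (hv : ∀ n, IsValuation M vbar (v n)) :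
    ∑ n : Fin N, maxAlloc M Menu (v n) - ((k : ℝ) - 1) * Menu.card * vbar ≤
      (N : ℝ) * rankGuarantee M N Menu v k := by
  set g : Bundle M → ℝ := fun b => kthHighest N (fun m => v m b) k with hg
  have hgpos : ∀ b, 0 ≤ g b := fun b => kth_nonneg hk1 hkN fun m => ((hv m).2 b).1
  have hrank : rankGuarantee M N Menu v k = maxAlloc M Menu g := rfl
  have key : ∀ n : Fin N,
      maxAlloc M Menu (v n) - ∑ b ∈ Menu, (if g b < v n b then vbar else 0)
        ≤ rankGuarantee M N Menu v k := by
    intro n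
    obtain ⟨X, hX, hXeq⟩ := maxAlloc_exists (Menu := Menu) (v n)
    have h1 : ∑ b ∈ X, v n b - ∑ b ∈ X, (if g b < v n b then vbar else 0) ≤ ∑ b ∈ X, g b := by
      rw [← Finset.sum_sub_distrib]
      refine Finset.sum_le_sum fun b _ => ?_
      by_cases h : g b < v n b
      · have h2 := ((hv n).2 b).2
        simp only [if_pos h]
        linarith [hgpos b]
      · push_neg at h
        simp only [if_neg (not_lt.mpr h)]
        linarith
    have h2 : ∑ b ∈ X, g b ≤ rankGuarantee M N Menu v k := by
      rw [hrank]; exact le_maxAlloc hX g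
    have h3 : ∑ b ∈ X, (if g b < v n b then vbar else 0)
        ≤ ∑ b ∈ Menu, (if g b < v n b then vbar else 0) := by
      refine Finset.sum_le_sum_of_subset_of_nonneg hX.1 fun b _ _ => ?_
      split_ifs <;> simp [hvbar]
    rw [← hXeq] at h1
    linarith
  have hsum := Finset.sum_le_sum fun n (_ : n ∈ (Finset.univ : Finset (Fin N))) => key n
  rw [Finset.sum_sub_distrib] at hsum
  have hRHS : ∑ _n : Fin N, rankGuarantee M N Menu v k
      = (N : ℝ) * rankGuarantee M N Menu v k := by
    rw [Finset.sum_const, Finset.card_univ, Fintype.card_fin, nsmul_eq_mul]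
  rw [hRHS] at hsum
  have hD : ∑ n : Fin N, ∑ b ∈ Menu, (if g b < v n b then vbar else 0)
      ≤ ((k : ℝ) - 1) * Menu.card * vbar := by
    rw [Finset.sum_comm]
    have hb : ∀ b ∈ Menu, ∑ n : Fin N, (if g b < v n b then vbar else 0)
        ≤ ((k : ℝ) - 1) * vbar := by
      intro b _
      have hcard : (((Finset.univ : Finset (Fin N)).filter fun n => g b < v n b).card) < k := by
        exact kth_bad_card (w := fun m => v m b) hk1
      have h1 : ∑ n : Fin N, (if g b < v n b then vbar else 0)
          = ((((Finset.univ : Finset (Fin N)).filter fun n => g b < v n b).card : ℝ)) * vbar := by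
        rw [← Finset.sum_filter, Finset.sum_const, nsmul_eq_mul]
      have h2 : ((((Finset.univ : Finset (Fin N)).filter fun n => g b < v n b).card : ℝ))
          ≤ (k : ℝ) - 1 := by
        have h3 : (((Finset.univ : Finset (Fin N)).filter fun n => g b < v n b).card) + 1 ≤ k :=
          hcard
        have h4 : ((((Finset.univ : Finset (Fin N)).filter fun n => g b < v n b).card + 1 : ℕ) : ℝ)
            ≤ (k : ℝ) := Nat.cast_le.mpr h3
        push_cast at h4
        linarith
      rw [h1]
      exact mul_le_mul_of_nonneg_right h2 hvbar
    calc ∑ b ∈ Menu, ∑ n : Fin N, (if g b < v n b then vbar else 0)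
        ≤ ∑ _b ∈ Menu, ((k : ℝ) - 1) * vbar := Finset.sum_le_sum hb
      _ = Menu.card * (((k : ℝ) - 1) * vbar) := by
          rw [Finset.sum_const, nsmul_eq_mul]
      _ = ((k : ℝ) - 1) * Menu.card * vbar := by ring
  linarith

end AuxLemmaA
section AuxMeasure
variable {M N k : ℕ} {vbar : ℝ} {Menu : Finset (Bundle M)}

lemma measurableSet_isValuation :
    MeasurableSet {w : Valuation M | IsValuation M vbar w} := by
  have h : {w : Valuation M | IsValuation M vbar w} =
      ((fun w : Valuation M => w ∅) ⁻¹' {0}) ∩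
        ⋂ b : Bundle M, (fun w : Valuation M => w b) ⁻¹' Set.Icc 0 vbar := by
    ext w
    simp [IsValuation, Set.mem_Icc, forall_and]
  rw [h]
  exact ((measurable_pi_apply ∅) (measurableSet_singleton 0)).inter
    (MeasurableSet.iInter fun b => (measurable_pi_apply b) measurableSet_Icc)

lemma measurableSet_profiles :
    MeasurableSet {v : Fin N → Valuation M | ∀ n, IsValuation M vbar (v n)} := by
  have h : {v : Fin N → Valuation M | ∀ n, IsValuation M vbar (v n)} =
      ⋂ n : Fin N, (fun v : Fin N → Valuation M => v n) ⁻¹' {w | IsValuation M vbar w} := by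
    ext v; simp
  rw [h]
  exact MeasurableSet.iInter fun n => (measurable_pi_apply n) measurableSet_isValuation

lemma profileOK_ae {F : Measure (Fin N → Valuation M)} (hF : ProfileOK M N vbar F) :
    ∀ᵐ v ∂F, ∀ n, IsValuation M vbar (v n) := by
  haveI := hF.1
  have hc : F {v : Fin N → Valuation M | ∀ n, IsValuation M vbar (v n)}ᶜ = 0 := by
    rw [measure_compl (measurableSet_profiles) (measure_ne_top F _), hF.2, measure_univ]
    simp
  rw [Filter.eventually_iff, MeasureTheory.mem_ae_iff]
  exact hc

lemma integrable_of_meas_bdd {α : Type*} [MeasurableSpace α] (μ : Measure α)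
    [IsFiniteMeasure μ] {f : α → ℝ} (hf : Measurable f) {C : ℝ}
    (h : ∀ᵐ x ∂μ, ‖f x‖ ≤ C) : Integrable f μ :=
  ⟨hf.aestronglyMeasurable, HasFiniteIntegral.of_bounded h⟩

lemma integrable_rank (hk1 : 1 ≤ k) (hkN : k ≤ N) (hvbar : 0 ≤ vbar)
    {F : Measure (Fin N → Valuation M)} (hF : ProfileOK M N vbar F) :
    Integrable (fun v => rankGuarantee M N Menu v k) F := by
  haveI := hF.1
  refine integrable_of_meas_bdd F (measurable_rank hk1 hkN) (C := Menu.card * vbar) ?_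
  filter_upwards [profileOK_ae hF] with v hv
  rw [Real.norm_eq_abs, abs_le]
  have h0 : 0 ≤ rankGuarantee M N Menu v k := by
    unfold rankGuarantee
    exact maxAlloc_nonneg _
  have hMv : 0 ≤ (Menu.card : ℝ) * vbar := by positivity
  constructor
  · linarith
  · exact rank_le_bound hk1 hkN hvbar v hv

lemma integrable_maxAlloc_comp (hvbar : 0 ≤ vbar)
    {F : Measure (Fin N → Valuation M)} (hF : ProfileOK M N vbar F) (n : Fin N) :
    Integrable (fun v : Fin N → Valuation M => maxAlloc M Menu (v n)) F := by
  haveI := hF.1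
  refine integrable_of_meas_bdd F
    ((measurable_maxAlloc (Menu := Menu)).comp (measurable_pi_apply n))
    (C := Menu.card * vbar) ?_
  filter_upwards [profileOK_ae hF] with v hv
  rw [Real.norm_eq_abs, abs_le]
  have h1 := maxAlloc_nonneg (Menu := Menu) (v n)
  have h2 := maxAlloc_le_bound (Menu := Menu) hvbar (fun b => (hv n).2 b)
  have hMv : 0 ≤ (Menu.card : ℝ) * vbar := by positivity
  constructor <;> linarith

lemma integrable_maxAlloc_val (hvbar : 0 ≤ vbar) {G : Measure (Valuation M)}
    (hG : ValOK M vbar G) :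
    Integrable (fun w : Valuation M => maxAlloc M Menu w) G := by
  haveI := hG.1
  refine integrable_of_meas_bdd G (measurable_maxAlloc (Menu := Menu))
    (C := Menu.card * vbar) ?_
  have hc : G {w : Valuation M | IsValuation M vbar w}ᶜ = 0 := by
    rw [measure_compl (measurableSet_isValuation) (measure_ne_top G _), hG.2, measure_univ]
    simp
  have hae : ∀ᵐ w ∂G, IsValuation M vbar w := by
    rw [Filter.eventually_iff, MeasureTheory.mem_ae_iff]
    exact hc
  filter_upwards [hae] with w hw
  rw [Real.norm_eq_abs, abs_le]
  have h1 := maxAlloc_nonneg (Menu := Menu) w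
  have h2 := maxAlloc_le_bound (Menu := Menu) hvbar (fun b => hw.2 b)
  have hMv : 0 ≤ (Menu.card : ℝ) * vbar := by positivity
  constructor <;> linarith

/-- Integral against the average marginal. -/
lemma integral_avgMarginal (hN1 : 1 ≤ N) {F : Measure (Fin N → Valuation M)}
    (hF : ProfileOK M N vbar F) {f : Valuation M → ℝ} (hf : Measurable f)
    (hint : ∀ n : Fin N, Integrable (fun v => f (v n)) F) :
    ∫ w, f w ∂(avgMarginal M N F) = (N : ℝ)⁻¹ * ∑ n : Fin N, ∫ v, f (v n) ∂F := by
  haveI := hF.1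
  have hmapint : ∀ n : Fin N, Integrable f (F.map fun v => v n) := by
    intro n
    rw [integrable_map_measure hf.aestronglyMeasurable (measurable_pi_apply n).aemeasurable]
    exact hint n
  rw [avgMarginal, integral_smul_measure, integral_finset_sum_measure fun n _ => hmapint n]
  congr 1
  · rw [ENNReal.toReal_inv]
    simp
  · refine Finset.sum_congr rfl fun n _ => ?_
    exact integral_map (measurable_pi_apply n).aemeasurable hf.aestronglyMeasurable

end AuxMeasure
section AuxDiag
variable {M N k : ℕ} {vbar : ℝ} {Menu : Finset (Bundle M)}

lemma measurable_diag : Measurable (fun (w : Valuation M) (_ : Fin N) => w) :=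
  measurable_pi_lambda _ fun _ => measurable_id

lemma diag_profileOK (hN1 : 1 ≤ N) {G : Measure (Valuation M)} (hG : ValOK M vbar G) :
    ProfileOK M N vbar (G.map (fun w (_ : Fin N) => w)) := by
  haveI := hG.1
  constructor
  · exact Measure.isProbabilityMeasure_map measurable_diag.aemeasurable
  · rw [Measure.map_apply measurable_diag measurableSet_profiles]
    have h : (fun (w : Valuation M) (_ : Fin N) => w) ⁻¹'
        {v : Fin N → Valuation M | ∀ n, IsValuation M vbar (v n)}
        = {w : Valuation M | IsValuation M vbar w} := by
      ext w
      simp only [Set.mem_preimage, Set.mem_setOf_eq]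
      constructor
      · intro h; exact h ⟨0, hN1⟩
      · intro h _; exact h
    rw [h, hG.2]

lemma diag_avgMarginal (hN1 : 1 ≤ N) (G : Measure (Valuation M)) :
    avgMarginal M N (G.map (fun w (_ : Fin N) => w)) = G := by
  have hmap : ∀ n : Fin N, (G.map (fun w (_ : Fin N) => w)).map (fun v => v n) = G := by
    intro n
    rw [Measure.map_map (measurable_pi_apply n) measurable_diag]
    exact Measure.map_id
  rw [avgMarginal]
  ext s hs
  rw [Measure.smul_apply, Measure.finset_sum_apply]
  have hsum : ∑ n : Fin N, ((G.map (fun w (_ : Fin N) => w)).map (fun v => v n)) s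
      = (N : ℝ≥0∞) * G s := by
    rw [Finset.sum_congr rfl fun n _ => by rw [hmap n]]
    rw [Finset.sum_const, Finset.card_univ, Fintype.card_fin, nsmul_eq_mul]
  rw [hsum, smul_eq_mul, ← mul_assoc, ENNReal.inv_mul_cancel (by simp; omega) (by simp), one_mul]

lemma Vsurplus_diag_le (hN1 : 1 ≤ N) (hvbar : 0 ≤ vbar) {G : Measure (Valuation M)}
    (hG : ValOK M vbar G) :
    Vsurplus M N Menu (G.map (fun w (_ : Fin N) => w)) ≤ ∫ w, maxAlloc M Menu w ∂G := by
  haveI := hG.1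
  rw [Vsurplus, integral_map measurable_diag.aemeasurable
    (measurable_surplusEx hN1).aestronglyMeasurable]
  refine integral_mono_of_nonneg (Filter.Eventually.of_forall fun w => surplusEx_nonneg hN1 _)
    (integrable_maxAlloc_val hvbar hG) (Filter.Eventually.of_forall fun w => ?_)
  exact surplusEx_diag_le hN1 w

lemma Vsurplus_nonneg (hN1 : 1 ≤ N) (F : Measure (Fin N → Valuation M)) :
    0 ≤ Vsurplus M N Menu F :=
  integral_nonneg fun v => surplusEx_nonneg hN1 v

end AuxDiag

/-- Theorem 3, sufficiency bound: if the menu `𝓜` is `𝔾`-sufficient, then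
`inf_{F∈𝔽} E_F[R^k_𝓜(v)] ≥ inf_{F∈𝔽} V*(F) − (k−1)·|𝓜|·v̄/N`. -/
theorem sufficient_menu_rank_guarantee_bound
    (M N : ℕ) (hM : 1 ≤ M) (vbar : ℝ) (hvbar : 0 ≤ vbar)
    (Menu : Finset (Bundle M)) (hMenu : IsMenu M Menu)
    (hN : Menu.card + 1 ≤ N) (k : ℕ) (hk1 : 1 ≤ k) (hkN : k ≤ N)
    (GG : Set (Measure (Valuation M))) (hGGne : GG.Nonempty)
    (hGG : ∀ G ∈ GG, ValOK M vbar G)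
    (hsufficient :
      sInf ((fun G => ∫ w, maxAlloc M Menu w ∂G) '' GG) =
        sInf ((fun G => ∫ w, maxAlloc M (completeMenu M) w ∂G) '' GG)) :
    sInf ((fun F => ∫ v, rankGuarantee M N Menu v k ∂F) ''
        {F : Measure (Fin N → Valuation M) |
          ProfileOK M N vbar F ∧ avgMarginal M N F ∈ GG}) ≥
      sInf ((fun F => Vsurplus M N (completeMenu M) F) ''
        {F : Measure (Fin N → Valuation M) |
          ProfileOK M N vbar F ∧ avgMarginal M N F ∈ GG})
        - ((k : ℝ) - 1) * (Menu.card : ℝ) * vbar / (N : ℝ) := by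
  classical
  have hN1 : 1 ≤ N := by omega
  have hNpos : (0 : ℝ) < N := by exact_mod_cast hN1
  set err : ℝ := ((k : ℝ) - 1) * (Menu.card : ℝ) * vbar / (N : ℝ) with herr
  have hk1R : (0 : ℝ) ≤ (k : ℝ) - 1 := by
    have h : (1 : ℝ) ≤ (k : ℝ) := by exact_mod_cast hk1
    linarith
  have herr0 : 0 ≤ err := by
    rw [herr]
    apply div_nonneg _ (le_of_lt hNpos)
    exact mul_nonneg (mul_nonneg hk1R (by positivity)) hvbar
  set Fam := {F : Measure (Fin N → Valuation M) |
      ProfileOK M N vbar F ∧ avgMarginal M N F ∈ GG} with hFam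
  have hdiag : ∀ G ∈ GG, (G.map (fun w (_ : Fin N) => w)) ∈ Fam := fun G hG =>
    ⟨diag_profileOK hN1 (hGG G hG), by rw [diag_avgMarginal hN1]; exact hG⟩
  obtain ⟨G₀, hG₀⟩ := hGGne
  have hFamne : Fam.Nonempty := ⟨_, hdiag G₀ hG₀⟩
  have hVbdd : ∀ y ∈ (fun F => Vsurplus M N (completeMenu M) F) '' Fam, (0 : ℝ) ≤ y := by
    rintro y ⟨F, hF, rfl⟩
    exact Vsurplus_nonneg hN1 F
  have hstep3 : sInf ((fun F => Vsurplus M N (completeMenu M) F) '' Fam)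
      ≤ sInf ((fun G => ∫ w, maxAlloc M (completeMenu M) w ∂G) '' GG) := by
    refine le_csInf (Set.Nonempty.image _ ⟨G₀, hG₀⟩) ?_
    rintro y ⟨G, hG, rfl⟩
    have h1 : Vsurplus M N (completeMenu M) (G.map (fun w (_ : Fin N) => w))
        ≤ ∫ w, maxAlloc M (completeMenu M) w ∂G := Vsurplus_diag_le hN1 hvbar (hGG G hG)
    exact le_trans (csInf_le ⟨0, fun z hz => hVbdd z hz⟩ ⟨_, hdiag G hG, rfl⟩) h1
  have hkey : ∀ F ∈ Fam, sInf ((fun G => ∫ w, maxAlloc M Menu w ∂G) '' GG) - err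
      ≤ ∫ v, rankGuarantee M N Menu v k ∂F := by
    rintro F ⟨hFOK, hFG⟩
    haveI := hFOK.1
    have hintR : Integrable (fun v => rankGuarantee M N Menu v k) F :=
      integrable_rank hk1 hkN hvbar hFOK
    have hintM : ∀ n : Fin N, Integrable
        (fun v : Fin N → Valuation M => maxAlloc M Menu (v n)) F :=
      fun n => integrable_maxAlloc_comp hvbar hFOK n
    have hintSum : Integrable
        (fun v : Fin N → Valuation M => ∑ n : Fin N, maxAlloc M Menu (v n)) F :=
      integrable_finset_sum _ fun n _ => hintM n
    have hmono : ∫ v, ((N : ℝ)⁻¹ * ∑ n : Fin N, maxAlloc M Menu (v n) - err) ∂F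
        ≤ ∫ v, rankGuarantee M N Menu v k ∂F := by
      refine integral_mono_ae ((hintSum.const_mul _).sub (integrable_const _)) hintR ?_
      filter_upwards [profileOK_ae hFOK] with v hv
      have hA := lemmaA (Menu := Menu) hk1 hkN hvbar v hv
      rw [← mul_le_mul_iff_right₀ hNpos]
      calc (N : ℝ) * ((N : ℝ)⁻¹ * ∑ n : Fin N, maxAlloc M Menu (v n) - err)
          = ∑ n : Fin N, maxAlloc M Menu (v n) - ((k : ℝ) - 1) * (Menu.card : ℝ) * vbar := by
            rw [herr]; field_simp
        _ ≤ (N : ℝ) * rankGuarantee M N Menu v k := hA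
    have havg := integral_avgMarginal hN1 hFOK (measurable_maxAlloc (Menu := Menu)) hintM
    have hcalc : ∫ v, ((N : ℝ)⁻¹ * ∑ n : Fin N, maxAlloc M Menu (v n) - err) ∂F
        = ∫ w, maxAlloc M Menu w ∂(avgMarginal M N F) - err := by
      rw [integral_sub (hintSum.const_mul _) (integrable_const _), integral_const,
        integral_const_mul, integral_finset_sum _ fun n _ => hintM n, havg]
      simp [measure_univ]
    have h4 : sInf ((fun G => ∫ w, maxAlloc M Menu w ∂G) '' GG)
        ≤ ∫ w, maxAlloc M Menu w ∂(avgMarginal M N F) := by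
      refine csInf_le ⟨0, ?_⟩ ⟨_, hFG, rfl⟩
      rintro y ⟨G, hG, rfl⟩
      exact integral_nonneg fun w => maxAlloc_nonneg w
    linarith
  refine le_csInf (Set.Nonempty.image _ hFamne) ?_
  rintro y ⟨F, hF, rfl⟩
  have h5 := hkey F hF
  rw [hsufficient] at h5
  have h6 := hstep3
  simp only at h5 ⊢
  linarith

end RankGuaranteedAuctions
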